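/- Let A, X, Z_1, …, Z_K, Γ̃, U be real N×T matrices with A ≠ 0, β ∈ ℝ, δ ∈ ℝ^K, and b > 0. Suppose Ỹ = Xβ + Σ_{k=1}^K Z_k δ_k + Γ̃ + U, ⟨A, X⟩_F = 1, and ⟨A, Z_k⟩_F = 0 for all k. Then, with β̂ = ⟨A, Ỹ⟩_F and C̃ = ‖Γ̃‖_*, one has (β̂ − β)² ≤ 4 · max{ ⟨A, U⟩_F² / ‖A‖_F² , C̃² / b² } · ( ‖A‖_F² + b² · s_1(A)² ). -/

import Mathlib

open scoped BigOperators

noncomputable section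

/-- Frobenius inner product of two real `N × T` matrices. -/
def finner {N T : ℕ} (A B : Matrix (Fin N) (Fin T) ℝ) : ℝ :=
  ∑ i, ∑ t, A i t * B i t

/-- Frobenius norm of a real `N × T` matrix. -/
def fnorm {N T : ℕ} (A : Matrix (Fin N) (Fin T) ℝ) : ℝ :=
  Real.sqrt (finner A A)

/-- The `j`-th singular value (0-indexed, in decreasing order) of a real `N × T` matrix:
the square root of the `j`-th largest eigenvalue of `A * Aᵀ`; `0` for `j ≥ N`. -/
def sval {N T : ℕ} (A : Matrix (Fin N) (Fin T) ℝ) (j : ℕ) : ℝ :=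
  if h : j < N then
    Real.sqrt
      ((Matrix.isHermitian_mul_conjTranspose_self A).eigenvalues
        (Tuple.sort ((Matrix.isHermitian_mul_conjTranspose_self A).eigenvalues)
          ((⟨j, h⟩ : Fin N).rev)))
  else 0

/-- Spectral norm: the largest singular value. -/
def s1 {N T : ℕ} (A : Matrix (Fin N) (Fin T) ℝ) : ℝ := sval A 0

/-- Nuclear norm: the sum of the singular values. -/
def nucNorm {N T : ℕ} (A : Matrix (Fin N) (Fin T) ℝ) : ℝ :=
  ∑ j ∈ Finset.range N, sval A j


open Matrix Finset

variable {N T : ℕ}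

lemma conjT_eq (A : Matrix (Fin N) (Fin T) ℝ) : Aᴴ = Aᵀ := by
  ext i j; simp [conjTranspose_apply]

lemma sval_nonneg (A : Matrix (Fin N) (Fin T) ℝ) (j : ℕ) : 0 ≤ sval A j := by
  unfold sval; split <;> positivity

lemma s1_nonneg (A : Matrix (Fin N) (Fin T) ℝ) : 0 ≤ s1 A := sval_nonneg A 0

lemma eig_le_s1_sq (A : Matrix (Fin N) (Fin T) ℝ) (i : Fin N) :
    (Matrix.isHermitian_mul_conjTranspose_self A).eigenvalues i ≤ (s1 A) ^ 2 := by
  have hN : 0 < N := i.pos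
  set ev := (Matrix.isHermitian_mul_conjTranspose_self A).eigenvalues with hev
  set σ := Tuple.sort ev with hσ
  have hs1 : s1 A = Real.sqrt (ev (σ ((⟨0, hN⟩ : Fin N).rev))) := by
    simp only [s1, sval, dif_pos hN, hev, hσ]
  have hnn : ∀ k, 0 ≤ ev k := fun k =>
    Matrix.eigenvalues_self_mul_conjTranspose_nonneg A k
  have hsq : (s1 A) ^ 2 = ev (σ ((⟨0, hN⟩ : Fin N).rev)) := by
    rw [hs1, Real.sq_sqrt (hnn _)]
  rw [hsq]
  have hmono : Monotone (ev ∘ σ) := Tuple.monotone_sort ev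
  have : ev i = (ev ∘ σ) (σ.symm i) := by simp
  rw [this]
  apply hmono
  rw [Fin.le_def]
  have : ((⟨0, hN⟩ : Fin N).rev).val = N - 1 := by simp [Fin.rev]
  rw [this]
  omega

lemma nucNorm_eq (A : Matrix (Fin N) (Fin T) ℝ) :
    nucNorm A = ∑ i : Fin N,
      Real.sqrt ((Matrix.isHermitian_mul_conjTranspose_self A).eigenvalues i) := by
  set ev := (Matrix.isHermitian_mul_conjTranspose_self A).eigenvalues with hev
  set σ := Tuple.sort ev with hσ
  have h1 : nucNorm A = ∑ j : Fin N, sval A j.val := by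
    rw [nucNorm, Finset.sum_range]
  rw [h1]
  have h2 : ∀ j : Fin N, sval A j.val = Real.sqrt (ev (σ (j.rev))) := by
    intro j
    simp only [sval, dif_pos j.isLt, hev, hσ]
  simp_rw [h2]
  exact Fintype.sum_equiv (Fin.revPerm.trans σ) _ _ (fun j => rfl)

-- quadratic form bound
lemma quad_le (A : Matrix (Fin N) (Fin T) ℝ) (u : Fin N → ℝ) :
    u ⬝ᵥ ((A * Aᴴ) *ᵥ u) ≤ (s1 A) ^ 2 * (u ⬝ᵥ u) := by
  set h := Matrix.isHermitian_mul_conjTranspose_self A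
  set W : Matrix (Fin N) (Fin N) ℝ := (h.eigenvectorUnitary : Matrix (Fin N) (Fin N) ℝ) with hW
  have hspec := h.spectral_theorem
  rw [Unitary.conjStarAlgAut_apply] at hspec
  set w : Fin N → ℝ := star W *ᵥ u with hw
  have e := congrArg (fun M : Matrix (Fin N) (Fin N) ℝ => u ⬝ᵥ (M *ᵥ u)) hspec
  have key : u ⬝ᵥ ((A * Aᴴ) *ᵥ u) = w ⬝ᵥ ((diagonal (RCLike.ofReal ∘ h.eigenvalues)) *ᵥ w) := by
    rw [e, ← hW]
    rw [← Matrix.mulVec_mulVec, ← Matrix.mulVec_mulVec]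
    rw [Matrix.dotProduct_mulVec u W, ← Matrix.mulVec_transpose]
    have : Wᵀ = star W := by rw [← conjT_eq]; rfl
    rw [this]
  rw [key]
  have hdiag : w ⬝ᵥ ((diagonal (RCLike.ofReal ∘ h.eigenvalues)) *ᵥ w)
      = ∑ i, h.eigenvalues i * (w i)^2 := by
    simp [dotProduct, Matrix.mulVec_diagonal]
    congr 1; ext i; ring
  rw [hdiag]
  have hww : w ⬝ᵥ w = u ⬝ᵥ u := by
    rw [hw, Matrix.dotProduct_mulVec, ← Matrix.mulVec_transpose]
    have h1 : (star W)ᵀ = W := by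
      have : Wᵀ = star W := by rw [← conjT_eq]; rfl
      rw [← this, Matrix.transpose_transpose]
    rw [h1, Matrix.mulVec_mulVec]
    have h2 : W * star W = 1 := (Matrix.mem_unitaryGroup_iff.mp h.eigenvectorUnitary.2)
    rw [h2, Matrix.one_mulVec]
  calc ∑ i, h.eigenvalues i * (w i)^2 ≤ ∑ i, (s1 A)^2 * (w i)^2 := by
        apply Finset.sum_le_sum
        intro i _
        exact mul_le_mul_of_nonneg_right (eig_le_s1_sq A i) (sq_nonneg _)
    _ = (s1 A)^2 * (u ⬝ᵥ u) := by
        rw [← Finset.mul_sum, ← hww]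
        congr 1
        simp [dotProduct]; congr 1; ext i; ring

lemma dot_sq_le (A : Matrix (Fin N) (Fin T) ℝ) (u : Fin N → ℝ) (v : Fin T → ℝ) :
    (u ⬝ᵥ (A *ᵥ v)) ^ 2 ≤ (s1 A) ^ 2 * (u ⬝ᵥ u) * (v ⬝ᵥ v) := by
  have h1 : u ⬝ᵥ (A *ᵥ v) = (Aᴴ *ᵥ u) ⬝ᵥ v := by
    rw [conjT_eq, Matrix.mulVec_transpose, ← Matrix.dotProduct_mulVec]
  rw [h1]
  have hCS : ((Aᴴ *ᵥ u) ⬝ᵥ v) ^ 2 ≤ ((Aᴴ *ᵥ u) ⬝ᵥ (Aᴴ *ᵥ u)) * (v ⬝ᵥ v) := by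
    simpa [dotProduct, pow_two] using
      Finset.sum_mul_sq_le_sq_mul_sq Finset.univ (Aᴴ *ᵥ u) v
  refine hCS.trans ?_
  have hv : (0:ℝ) ≤ v ⬝ᵥ v := Finset.sum_nonneg fun i _ => mul_self_nonneg _
  have h2 : (Aᴴ *ᵥ u) ⬝ᵥ (Aᴴ *ᵥ u) = u ⬝ᵥ ((A * Aᴴ) *ᵥ u) := by
    have h3 : (Aᴴ *ᵥ u) ⬝ᵥ (Aᴴ *ᵥ u) = u ⬝ᵥ (A *ᵥ (Aᴴ *ᵥ u)) := by
      rw [conjT_eq, Matrix.mulVec_transpose, ← Matrix.dotProduct_mulVec]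
    rw [h3, Matrix.mulVec_mulVec]
  rw [h2] at *
  exact mul_le_mul_of_nonneg_right (quad_le A u) hv


lemma finner_abs_le (A Γ : Matrix (Fin N) (Fin T) ℝ) :
    |finner A Γ| ≤ s1 A * nucNorm Γ := by
  classical
  set h := Matrix.isHermitian_mul_conjTranspose_self Γ with hh
  set W : Matrix (Fin N) (Fin N) ℝ := (h.eigenvectorUnitary : Matrix (Fin N) (Fin N) ℝ) with hW
  set u : Fin N → Fin N → ℝ := fun j => ⇑(h.eigenvectorBasis j) with hu
  set v : Fin N → Fin T → ℝ := fun j => Γᴴ *ᵥ u j with hv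
  have hWapp : ∀ i j, W i j = u j i := fun i j => rfl
  have hWW : W * star W = 1 := Matrix.mem_unitaryGroup_iff.mp h.eigenvectorUnitary.2
  have hvt : ∀ j t, v j t = ∑ l, Γ l t * u j l := by
    intro j t
    simp [hv, Matrix.mulVec, dotProduct, Matrix.conjTranspose_apply]
  have entry : ∀ i t, Γ i t = ∑ j, u j i * v j t := by
    intro i t
    have e1 : Γ i t = ∑ l, (1 : Matrix (Fin N) (Fin N) ℝ) i l * Γ l t := by
      simp [Matrix.one_apply]
    rw [e1, ← hWW]
    have e2 : ∀ l, (W * star W) i l = ∑ j, u j i * u j l := by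
      intro l
      simp [Matrix.mul_apply, Matrix.star_apply, hWapp]
    simp_rw [e2, hvt, Finset.sum_mul, Finset.mul_sum]
    rw [Finset.sum_comm]
    apply Finset.sum_congr rfl
    intro j _
    apply Finset.sum_congr rfl
    intro l _
    ring
  have dec : finner A Γ = ∑ j, (u j) ⬝ᵥ (A *ᵥ (v j)) := by
    have e : finner A Γ = ∑ i, ∑ t, ∑ j, A i t * (u j i * v j t) := by
      unfold finner
      apply Finset.sum_congr rfl; intro i _
      apply Finset.sum_congr rfl; intro t _
      rw [entry i t, Finset.mul_sum]
    rw [e]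
    have e2 : ∀ i : Fin N, ∑ t, ∑ j, A i t * (u j i * v j t)
        = ∑ j, ∑ t, A i t * (u j i * v j t) := fun i => Finset.sum_comm
    simp_rw [e2]
    rw [Finset.sum_comm]
    apply Finset.sum_congr rfl; intro j _
    simp_rw [dotProduct, Matrix.mulVec, dotProduct, Finset.mul_sum]
    apply Finset.sum_congr rfl; intro i _
    apply Finset.sum_congr rfl; intro t _
    ring
  have huu : ∀ j, (u j) ⬝ᵥ (u j) = 1 := by
    intro j
    have h1 := orthonormal_iff_ite.mp h.eigenvectorBasis.orthonormal j j
    rw [if_pos rfl] at h1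
    rw [← h1]
    simp only [PiLp.inner_apply, RCLike.inner_apply, conj_trivial, dotProduct, hu]
  have hvv : ∀ j, (v j) ⬝ᵥ (v j) = h.eigenvalues j := by
    intro j
    have h3 : (v j) ⬝ᵥ (v j) = (u j) ⬝ᵥ ((Γ * Γᴴ) *ᵥ (u j)) := by
      rw [hv]
      simp only []
      rw [conjT_eq, Matrix.mulVec_transpose, ← Matrix.dotProduct_mulVec,
        ← Matrix.mulVec_transpose, ← conjT_eq, Matrix.mulVec_mulVec]
    rw [h3]
    have h5 : (Γ * Γᴴ) *ᵥ u j = h.eigenvalues j • u j := h.mulVec_eigenvectorBasis j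
    rw [h5, dotProduct_smul, huu j]
    simp
  have term_le : ∀ j, |(u j) ⬝ᵥ (A *ᵥ (v j))| ≤ s1 A * Real.sqrt (h.eigenvalues j) := by
    intro j
    have h4 := dot_sq_le A (u j) (v j)
    rw [huu j, hvv j, mul_one] at h4
    have h5 : |(u j) ⬝ᵥ (A *ᵥ (v j))| = Real.sqrt (((u j) ⬝ᵥ (A *ᵥ (v j)))^2) := by
      rw [Real.sqrt_sq_eq_abs]
    rw [h5]
    calc Real.sqrt (((u j) ⬝ᵥ (A *ᵥ (v j)))^2) ≤ Real.sqrt ((s1 A)^2 * h.eigenvalues j) :=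
          Real.sqrt_le_sqrt h4
      _ = s1 A * Real.sqrt (h.eigenvalues j) := by
          rw [Real.sqrt_mul (sq_nonneg _), Real.sqrt_sq (s1_nonneg A)]
  calc |finner A Γ| ≤ ∑ j, |(u j) ⬝ᵥ (A *ᵥ (v j))| := by
        rw [dec]; exact Finset.abs_sum_le_sum_abs _ _
    _ ≤ ∑ j, s1 A * Real.sqrt (h.eigenvalues j) := Finset.sum_le_sum fun j _ => term_le j
    _ = s1 A * nucNorm Γ := by rw [nucNorm_eq, Finset.mul_sum]

lemma finner_add_right (A B C : Matrix (Fin N) (Fin T) ℝ) :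
    finner A (B + C) = finner A B + finner A C := by
  simp [finner, mul_add, Finset.sum_add_distrib]

lemma finner_smul_right (A B : Matrix (Fin N) (Fin T) ℝ) (c : ℝ) :
    finner A (c • B) = c * finner A B := by
  simp [finner, Finset.mul_sum, mul_left_comm]

lemma finner_sum_right {K : ℕ} (A : Matrix (Fin N) (Fin T) ℝ)
    (M : Fin K → Matrix (Fin N) (Fin T) ℝ) :
    finner A (∑ k, M k) = ∑ k, finner A (M k) := by
  unfold finner
  simp_rw [Matrix.sum_apply, Finset.mul_sum]
  have e2 : ∀ i : Fin N, ∑ t, ∑ k, A i t * M k i t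
      = ∑ k, ∑ t, A i t * M k i t := fun i => Finset.sum_comm
  simp_rw [e2]
  exact Finset.sum_comm

lemma fnorm_sq (A : Matrix (Fin N) (Fin T) ℝ) (hA : A ≠ 0) :
    0 < (fnorm A)^2 ∧ (fnorm A)^2 = finner A A := by
  have hnn : 0 ≤ finner A A :=
    Finset.sum_nonneg fun i _ => Finset.sum_nonneg fun t _ => mul_self_nonneg _
  have heq : (fnorm A)^2 = finner A A := Real.sq_sqrt hnn
  refine ⟨?_, heq⟩
  rw [heq]
  rcases hnn.lt_or_eq with h | h
  · exact h
  · exfalso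
    apply hA
    ext i t
    have h0 : ∀ i ∈ Finset.univ, (∑ t, A i t * A i t) = 0 := by
      intro i _
      have := (Finset.sum_eq_zero_iff_of_nonneg
        (fun i _ => Finset.sum_nonneg fun t _ => mul_self_nonneg (A i t))).mp h.symm
      exact this i (Finset.mem_univ i)
    have h1 := (Finset.sum_eq_zero_iff_of_nonneg
      (fun t _ => mul_self_nonneg (A i t))).mp (h0 i (Finset.mem_univ i)) t (Finset.mem_univ t)
    have := mul_self_eq_zero.mp h1
    simpa using this

/-- Squared-error bound for the augmented linear estimator: with `C̃ = ‖Γ̃‖_*`,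
`(β̂_A − β)² ≤ 4 · max{⟨A,U⟩_F²/‖A‖_F², C̃²/b²} · (‖A‖_F² + b² s₁(A)²)`. -/
theorem augmented_linear_estimator_squared_error_bound {N T K : ℕ}
    (A X : Matrix (Fin N) (Fin T) ℝ) (Z : Fin K → Matrix (Fin N) (Fin T) ℝ)
    (Γtil U Ytil : Matrix (Fin N) (Fin T) ℝ)
    (β : ℝ) (δ : Fin K → ℝ) (b : ℝ) (hb : 0 < b) (hA : A ≠ 0)
    (hY : Ytil = β • X + ∑ k, δ k • Z k + Γtil + U)
    (hAX : finner A X = 1) (hAZ : ∀ k, finner A (Z k) = 0) :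
    (finner A Ytil - β) ^ 2 ≤
      4 * max ((finner A U) ^ 2 / (fnorm A) ^ 2) ((nucNorm Γtil) ^ 2 / b ^ 2) *
        ((fnorm A) ^ 2 + b ^ 2 * (s1 A) ^ 2) := by
  have hβ : finner A Ytil - β = finner A Γtil + finner A U := by
    rw [hY, finner_add_right, finner_add_right, finner_add_right, finner_smul_right,
      finner_sum_right, hAX]
    simp_rw [finner_smul_right]
    simp [hAZ]
    ring
  set P := finner A Γtil
  set Q := finner A U
  set F := (fnorm A)^2 with hFdef
  set S := (s1 A)^2 with hSdef
  set C := nucNorm Γtil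
  set M := max (Q^2/F) (C^2/b^2) with hMdef
  obtain ⟨hF, _⟩ := fnorm_sq A hA
  have hS : 0 ≤ S := sq_nonneg _
  have hM : 0 ≤ M := le_trans (by positivity) (le_max_left (Q^2/F) (C^2/b^2))
  have hQ : Q^2 ≤ M * F := by
    have := le_max_left (Q^2/F) (C^2/b^2)
    calc Q^2 = (Q^2/F) * F := by rw [div_mul_cancel₀ _ hF.ne']
      _ ≤ M * F := mul_le_mul_of_nonneg_right this hF.le
  have hPabs : |P| ≤ s1 A * C := finner_abs_le A Γtil
  have hP1 : P^2 ≤ S * C^2 := by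
    have h1 : P^2 ≤ (s1 A * C)^2 := by
      rw [← sq_abs P]
      exact pow_le_pow_left₀ (abs_nonneg P) hPabs 2
    calc P^2 ≤ (s1 A * C)^2 := h1
      _ = S * C^2 := by rw [mul_pow]
  have hC2 : C^2 ≤ M * b^2 := by
    have := le_max_right (Q^2/F) (C^2/b^2)
    calc C^2 = (C^2/b^2) * b^2 := by field_simp
      _ ≤ M * b^2 := mul_le_mul_of_nonneg_right this (sq_nonneg b)
  have hP : P^2 ≤ M * (b^2 * S) := by
    calc P^2 ≤ S * C^2 := hP1
      _ ≤ S * (M * b^2) := mul_le_mul_of_nonneg_left hC2 hS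
      _ = M * (b^2 * S) := by ring
  rw [hβ]
  nlinarith [sq_nonneg (P - Q), mul_nonneg hM hF.le, mul_nonneg hM (mul_nonneg (sq_nonneg b) hS)]

end
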